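/- Let n ≥ d ≥ 1 and m ≥ 1, and let A be any set of injective functions from {1,…,m} to {1,…,n+m} whose pairwise Chebyshev distance is at least d. For σ ∈ A let σ^C = {1,…,n+m} \ image(σ). Then P(n+m, d) ≥ Σ_{σ ∈ A} P_d(σ^C). -/

import Mathlib

/-- The Chebyshev distance between two functions `{1,…,m} → ℤ≥0`
(represented on `Fin m`): `max_i |σ(i) − τ(i)|`. -/
def cheb {m : ℕ} (σ τ : Fin m → ℕ) : ℕ :=
  Finset.univ.sup fun i => Nat.dist (σ i) (τ i)

/-- `Pd d S` is the maximum cardinality of a set of bijections from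
`{1,…,|S|}` onto the finite set `S` of integers (represented as injections
`Fin S.card → ℕ` with values in `S`) whose pairwise Chebyshev distance is at
least `d`. -/
noncomputable def Pd (d : ℕ) (S : Finset ℕ) : ℕ :=
  sSup {k | ∃ A : Finset (Fin S.card → ℕ),
    (∀ σ ∈ A, Function.Injective σ ∧ ∀ i, σ i ∈ S) ∧
    (∀ σ ∈ A, ∀ τ ∈ A, σ ≠ τ → d ≤ cheb σ τ) ∧ A.card = k}

/-- `P n d` is the maximum cardinality of a set of permutations of `{1,…,n}`
whose pairwise Chebyshev distance is at least `d`. -/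
noncomputable def P (n d : ℕ) : ℕ := Pd d (Finset.Icc 1 n)

lemma dist_le_cheb {m : ℕ} (σ τ : Fin m → ℕ) (i : Fin m) :
    Nat.dist (σ i) (τ i) ≤ cheb σ τ := by
  rw [cheb]
  exact Finset.le_sup (f := fun i => Nat.dist (σ i) (τ i)) (Finset.mem_univ i)

lemma pd_bdd (d : ℕ) (S : Finset ℕ) :
    BddAbove {k | ∃ A : Finset (Fin S.card → ℕ),
      (∀ σ ∈ A, Function.Injective σ ∧ ∀ i, σ i ∈ S) ∧
      (∀ σ ∈ A, ∀ τ ∈ A, σ ≠ τ → d ≤ cheb σ τ) ∧ A.card = k} := by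
  refine ⟨S.card ^ S.card, ?_⟩
  rintro k ⟨A, h1, -, rfl⟩
  have hsub : A ⊆ Fintype.piFinset fun _ : Fin S.card => S := by
    intro σ hσ
    simp only [Fintype.mem_piFinset]
    exact (h1 σ hσ).2
  calc A.card ≤ (Fintype.piFinset fun _ : Fin S.card => S).card :=
        Finset.card_le_card hsub
    _ = S.card ^ S.card := by
        simp [Fintype.card_piFinset, Finset.prod_const]

lemma pd_mem (d : ℕ) (S : Finset ℕ) :
    ∃ B : Finset (Fin S.card → ℕ),
      (∀ σ ∈ B, Function.Injective σ ∧ ∀ i, σ i ∈ S) ∧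
      (∀ σ ∈ B, ∀ τ ∈ B, σ ≠ τ → d ≤ cheb σ τ) ∧ B.card = Pd d S := by
  have hne : {k | ∃ A : Finset (Fin S.card → ℕ),
      (∀ σ ∈ A, Function.Injective σ ∧ ∀ i, σ i ∈ S) ∧
      (∀ σ ∈ A, ∀ τ ∈ A, σ ≠ τ → d ≤ cheb σ τ) ∧ A.card = k}.Nonempty :=
    ⟨0, ∅, by simp⟩
  exact Nat.sSup_mem hne (pd_bdd d S)

lemma le_pd (d : ℕ) (S : Finset ℕ) (B : Finset (Fin S.card → ℕ))
    (h1 : ∀ σ ∈ B, Function.Injective σ ∧ ∀ i, σ i ∈ S)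
    (h2 : ∀ σ ∈ B, ∀ τ ∈ B, σ ≠ τ → d ≤ cheb σ τ) :
    B.card ≤ Pd d S :=
  le_csSup (pd_bdd d S) ⟨B, h1, h2, rfl⟩

/-- Glue an injection on `Fin m` with an injection on the complement. -/
def glue (m : ℕ) {t : ℕ} (σ : Fin m → ℕ) {c : ℕ} (τ : Fin c → ℕ) (i : Fin t) : ℕ :=
  if h : (i : ℕ) < m then σ ⟨i, h⟩
  else if h2 : (i : ℕ) - m < c then τ ⟨(i : ℕ) - m, h2⟩ else 0

lemma glue_lo (m : ℕ) {t : ℕ} (σ : Fin m → ℕ) {c : ℕ} (τ : Fin c → ℕ) (i : Fin t)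
    (h : (i : ℕ) < m) : glue m σ τ i = σ ⟨i, h⟩ := dif_pos h

lemma glue_hi (m : ℕ) {t : ℕ} (σ : Fin m → ℕ) {c : ℕ} (τ : Fin c → ℕ) (i : Fin t)
    (h : ¬ (i : ℕ) < m) (h2 : (i : ℕ) - m < c) :
    glue m σ τ i = τ ⟨(i : ℕ) - m, h2⟩ := by
  rw [glue, dif_neg h, dif_pos h2]

lemma glue_lo' (m : ℕ) {t : ℕ} (σ : Fin m → ℕ) {c : ℕ} (τ : Fin c → ℕ) (i : Fin m)
    (h : (i : ℕ) < t) : glue m σ τ ⟨(i : ℕ), h⟩ = σ i :=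
  glue_lo m σ τ ⟨(i : ℕ), h⟩ i.2

lemma glue_hi' (m : ℕ) {t : ℕ} (σ : Fin m → ℕ) {c : ℕ} (τ : Fin c → ℕ) (j : Fin c)
    (h : m + (j : ℕ) < t) : glue m σ τ ⟨m + (j : ℕ), h⟩ = τ j := by
  have h2 : m + (j : ℕ) - m < c := by simp only [Nat.add_sub_cancel_left]; exact j.2
  rw [glue_hi m σ τ ⟨m + (j : ℕ), h⟩ (show ¬ m + (j : ℕ) < m by omega) h2]
  congr 1
  apply Fin.ext
  show m + (j : ℕ) - m = (j : ℕ)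
  omega

/-- Let `n ≥ d ≥ 1`, `m ≥ 1`, and let `A` be a set of injective functions
from `{1,…,m}` to `{1,…,n+m}` with pairwise Chebyshev distance at least `d`.
With `σ^C = {1,…,n+m} \ image(σ)`, we have
`P(n+m, d) ≥ Σ_{σ ∈ A} P_d(σ^C)`. -/
theorem stmt7 (n d m : ℕ) (hd : 1 ≤ d) (hn : d ≤ n) (hm : 1 ≤ m)
    (A : Finset (Fin m → ℕ))
    (hinj : ∀ σ ∈ A, Function.Injective σ)
    (hval : ∀ σ ∈ A, ∀ i, σ i ∈ Finset.Icc 1 (n + m))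
    (hdist : ∀ σ ∈ A, ∀ τ ∈ A, σ ≠ τ → d ≤ cheb σ τ) :
    ∑ σ ∈ A, Pd d (Finset.Icc 1 (n + m) \ Finset.image σ Finset.univ) ≤
      P (n + m) d := by
  classical
  set S : Finset ℕ := Finset.Icc 1 (n + m) with hS
  have htS : S.card = n + m := by simp [hS]
  have hc : ∀ σ ∈ A, (S \ Finset.image σ Finset.univ).card = n := by
    intro σ hσ
    have hsub : Finset.image σ Finset.univ ⊆ S := by
      intro x hx
      simp only [Finset.mem_image] at hx
      obtain ⟨i, -, rfl⟩ := hx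
      exact hval σ hσ i
    have himg : (Finset.image σ Finset.univ).card = m := by
      rw [Finset.card_image_of_injective _ (hinj σ hσ), Finset.card_univ,
        Fintype.card_fin]
    rw [Finset.card_sdiff_of_subset hsub, himg, htS]
    omega
  choose B hB1 hB2 hB3 using fun σ : Fin m → ℕ =>
    pd_mem d (S \ Finset.image σ Finset.univ)
  set C : Finset (Fin S.card → ℕ) :=
    A.biUnion (fun σ => (B σ).image (fun τ => glue m σ τ)) with hC
  -- a helper for reading off the high coordinates
  have hhi : ∀ σ ∈ A, ∀ τ ∈ B σ, ∀ i : Fin S.card, ¬ (i : ℕ) < m →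
      ∃ h2 : (i : ℕ) - m < (S \ Finset.image σ Finset.univ).card,
        glue m σ τ i = τ ⟨(i : ℕ) - m, h2⟩ := by
    intro σ hσ τ hτ i hi
    have h2 : (i : ℕ) - m < (S \ Finset.image σ Finset.univ).card := by
      have h3 := i.2
      have h4 := hc σ hσ
      omega
    exact ⟨h2, glue_hi m σ τ i hi h2⟩
  -- the glued maps determine σ
  have hdisj : ∀ σ₁ ∈ A, ∀ σ₂ ∈ A, ∀ τ₁ ∈ B σ₁, ∀ τ₂ ∈ B σ₂,
      (fun i => glue m σ₁ τ₁ i : Fin S.card → ℕ) = glue m σ₂ τ₂ → σ₁ = σ₂ := by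
    intro σ₁ h₁ σ₂ h₂ τ₁ hτ₁ τ₂ hτ₂ heq
    funext i
    have hi : (i : ℕ) < S.card := by have := i.2; omega
    have h := congrFun heq (⟨(i : ℕ), hi⟩ : Fin S.card)
    rw [glue_lo' m σ₁ τ₁ i hi, glue_lo' m σ₂ τ₂ i hi] at h
    exact h
  have hCcard : C.card = ∑ σ ∈ A, Pd d (S \ Finset.image σ Finset.univ) := by
    rw [hC, Finset.card_biUnion]
    · apply Finset.sum_congr rfl
      intro σ hσ
      rw [Finset.card_image_of_injOn, hB3]
      intro τ₁ h₁ τ₂ h₂ heq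
      funext j
      have hj : m + (j : ℕ) < S.card := by
        have h3 := j.2
        have h4 := hc σ hσ
        omega
      have h := congrFun heq (⟨m + (j : ℕ), hj⟩ : Fin S.card)
      simp only at h
      rw [glue_hi' m σ τ₁ j hj, glue_hi' m σ τ₂ j hj] at h
      exact h
    · intro σ₁ h₁ σ₂ h₂ hne
      rw [Function.onFun, Finset.disjoint_left]
      rintro π hπ₁ hπ₂
      simp only [Finset.mem_image] at hπ₁ hπ₂
      obtain ⟨τ₁, hτ₁, rfl⟩ := hπ₁
      obtain ⟨τ₂, hτ₂, heq⟩ := hπ₂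
      exact hne (hdisj σ₁ h₁ σ₂ h₂ τ₁ hτ₁ τ₂ hτ₂ heq.symm)
  -- C satisfies the defining properties
  have hCprop1 : ∀ π ∈ C, Function.Injective π ∧ ∀ i, π i ∈ S := by
    intro π hπ
    rw [hC, Finset.mem_biUnion] at hπ
    obtain ⟨σ, hσ, hπ⟩ := hπ
    rw [Finset.mem_image] at hπ
    obtain ⟨τ, hτ, rfl⟩ := hπ
    constructor
    · intro i j hij
      by_cases hi : (i : ℕ) < m <;> by_cases hj : (j : ℕ) < m
      · rw [glue_lo m σ τ i hi, glue_lo m σ τ j hj] at hij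
        have := hinj σ hσ hij
        rw [Fin.mk.injEq] at this
        exact Fin.ext this
      · obtain ⟨e2, he2⟩ := hhi σ hσ τ hτ j hj
        rw [glue_lo m σ τ i hi, he2] at hij
        exfalso
        have hmem := (hB1 σ τ hτ).2 ⟨(j : ℕ) - m, e2⟩
        rw [Finset.mem_sdiff] at hmem
        exact hmem.2 (Finset.mem_image.2 ⟨⟨(i : ℕ), hi⟩, Finset.mem_univ _, hij⟩)
      · obtain ⟨e1, he1⟩ := hhi σ hσ τ hτ i hi
        rw [glue_lo m σ τ j hj, he1] at hij
        exfalso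
        have hmem := (hB1 σ τ hτ).2 ⟨(i : ℕ) - m, e1⟩
        rw [Finset.mem_sdiff] at hmem
        exact hmem.2 (Finset.mem_image.2 ⟨⟨(j : ℕ), hj⟩, Finset.mem_univ _, hij.symm⟩)
      · obtain ⟨e1, he1⟩ := hhi σ hσ τ hτ i hi
        obtain ⟨e2, he2⟩ := hhi σ hσ τ hτ j hj
        rw [he1, he2] at hij
        have := (hB1 σ τ hτ).1 hij
        have hv := congrArg Fin.val this
        simp only at hv
        apply Fin.ext
        omega
    · intro i
      by_cases hi : (i : ℕ) < m
      · rw [glue_lo m σ τ i hi]; exact hval σ hσ _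
      · obtain ⟨e1, he1⟩ := hhi σ hσ τ hτ i hi
        rw [he1]
        have hmem := (hB1 σ τ hτ).2 ⟨(i : ℕ) - m, e1⟩
        rw [Finset.mem_sdiff] at hmem
        exact hmem.1
  have hCprop2 : ∀ π₁ ∈ C, ∀ π₂ ∈ C, π₁ ≠ π₂ → d ≤ cheb π₁ π₂ := by
    intro π₁ hπ₁ π₂ hπ₂ hne
    rw [hC, Finset.mem_biUnion] at hπ₁ hπ₂
    obtain ⟨σ₁, hσ₁, hπ₁⟩ := hπ₁
    obtain ⟨σ₂, hσ₂, hπ₂⟩ := hπ₂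
    rw [Finset.mem_image] at hπ₁ hπ₂
    obtain ⟨τ₁, hτ₁, rfl⟩ := hπ₁
    obtain ⟨τ₂, hτ₂, rfl⟩ := hπ₂
    by_cases hσ : σ₁ = σ₂
    · subst hσ
      have hτ : τ₁ ≠ τ₂ := by rintro rfl; exact hne rfl
      refine le_trans (hB2 σ₁ τ₁ hτ₁ τ₂ hτ₂ hτ) ?_
      apply Finset.sup_le
      intro j _
      have hj : m + (j : ℕ) < S.card := by
        have h3 := j.2
        have h4 := hc σ₁ hσ₁
        omega
      have key := dist_le_cheb (glue m σ₁ τ₁ : Fin S.card → ℕ)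
        (glue m σ₁ τ₂) ⟨m + (j : ℕ), hj⟩
      rw [glue_hi' m σ₁ τ₁ j hj, glue_hi' m σ₁ τ₂ j hj] at key
      exact key
    · refine le_trans (hdist σ₁ hσ₁ σ₂ hσ₂ hσ) ?_
      apply Finset.sup_le
      intro i _
      have hi : (i : ℕ) < S.card := by have := i.2; omega
      have key := dist_le_cheb (glue m σ₁ τ₁ : Fin S.card → ℕ)
        (glue m σ₂ τ₂) ⟨(i : ℕ), hi⟩
      rw [glue_lo' m σ₁ τ₁ i hi, glue_lo' m σ₂ τ₂ i hi] at key
      exact key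
  have hfin := le_pd d S C hCprop1 hCprop2
  rw [hCcard] at hfin
  exact hfin
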